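/- Let ε ∈ (0,1), a = 1+ε, μ > 0, δ > 0, β₀ > 0 with 0 < 2β₀^{1−ε} < δ(1−ε), and let β(t) = (δ(1−ε)/2 · (e^{−2t} − 1) + β₀^{1−ε})^{1/(1−ε)} on [0,T₀), where T₀ = ½ ln(δ(1−ε)/(δ(1−ε) − 2β₀^{1−ε})). Set M(ε) = sup_{s>0} s^{2−ε}/(1+s²) (a finite positive number). Assume μ is large enough that cos(2 arctan(r^a/(e^{at} μ))) ≥ 1/(1+ε) for all r ∈ [0,1] and t ≥ 0, and assume δ ≤ με/(M(ε)(μ²+1)). Then the function f(r,t) = 2 arctan(r/(e^t β(t))) + 2 arctan(r^a/(e^{at} μ)) is a subsolution of the drifted harmonic map heat equation on (0,1] × [0,T₀), i.e. f_t + r f_r ≤ f_rr + f_r/r − sin(2f)/(2r²) for all r ∈ (0,1] and t ∈ [0,T₀). -/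

import Mathlib

open Set Real

noncomputable section

/-- The blow-up time `T₀ = ½ ln(δ(1−ε)/(δ(1−ε) − 2β₀^{1−ε}))`. -/
def blowupTime (ε δ β₀ : ℝ) : ℝ :=
  (1 / 2) * Real.log (δ * (1 - ε) / (δ * (1 - ε) - 2 * β₀ ^ (1 - ε)))

/-- The solution `β(t) = (δ(1−ε)/2 (e^{−2t} − 1) + β₀^{1−ε})^{1/(1−ε)}` of the ODE
`β' = −δ e^{−2t} β^ε`, `β(0) = β₀`. -/
def betaFun (ε δ β₀ : ℝ) (t : ℝ) : ℝ :=
  (δ * (1 - ε) / 2 * (Real.exp (-2 * t) - 1) + β₀ ^ (1 - ε)) ^ (1 / (1 - ε))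

/-- `M(ε) = sup_{s > 0} s^{2−ε}/(1+s²)`. -/
def Meps (ε : ℝ) : ℝ :=
  sSup {y : ℝ | ∃ s : ℝ, 0 < s ∧ y = s ^ (2 - ε) / (1 + s ^ 2)}

/-- The barrier `f(r,t) = 2 arctan(r/(e^t β(t))) + 2 arctan(r^{1+ε}/(e^{(1+ε)t} μ))`. -/
def barrier (ε δ β₀ μ : ℝ) (r t : ℝ) : ℝ :=
  2 * Real.arctan (r / (Real.exp t * betaFun ε δ β₀ t))
    + 2 * Real.arctan (r ^ (1 + ε) / (Real.exp ((1 + ε) * t) * μ))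

/- ### Auxiliary lemmas -/

lemma aux_sin_two_arctan (x : ℝ) : Real.sin (2 * Real.arctan x) = 2 * x / (1 + x ^ 2) := by
  have h : (0:ℝ) < 1 + x ^ 2 := by positivity
  have hs0 : Real.sqrt (1 + x ^ 2) ≠ 0 := by positivity
  rw [Real.sin_two_mul, Real.sin_arctan, Real.cos_arctan]
  field_simp
  rw [Real.sq_sqrt h.le]

lemma aux_cos_two_arctan (x : ℝ) : Real.cos (2 * Real.arctan x) = (1 - x ^ 2) / (1 + x ^ 2) := by
  have h : (0:ℝ) < 1 + x ^ 2 := by positivity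
  rw [Real.cos_two_mul, Real.cos_arctan]
  rw [div_pow, one_pow, Real.sq_sqrt h.le]
  field_simp
  ring

lemma aux_lemQ (ε μ q : ℝ) (hε0 : 0 < ε)
    (h2 : q ^ 2 * μ ^ 2 ≤ 1) (h3 : 2 + ε ≤ ε * μ ^ 2) :
    0 ≤ (μ ^ 2 + 1) * (ε * (2 + ε) * (1 - q ^ 2) - 2 * q ^ 2) - ε * μ ^ 2 * (1 + q ^ 2) ^ 2 := by
  have hu : 0 ≤ 1 - q ^ 2 * μ ^ 2 := by linarith
  have hv : 0 ≤ ε * μ ^ 2 - (2 + ε) := by linarith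
  nlinarith [mul_nonneg hu hv, mul_nonneg hu (sq_nonneg q), mul_nonneg hu hu,
    mul_nonneg (mul_nonneg hu hu) hε0.le, mul_nonneg hv (sq_nonneg q),
    mul_nonneg hu hε0.le, sq_nonneg q, sq_nonneg (q*μ),
    mul_nonneg (mul_nonneg hu (sq_nonneg q)) hε0.le]

lemma aux_corePoly (ε μ s q : ℝ) (hε0 : 0 < ε)
    (h2 : q ^ 2 * μ ^ 2 ≤ 1) (h3 : 2 + ε ≤ ε * μ ^ 2) :
    ε * μ ^ 2 * (1 + s ^ 2) ^ 2 * (1 + q ^ 2) ^ 2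
      ≤ (μ ^ 2 + 1) * (8 * s * q * (1 - s ^ 2)
          + (1 - q ^ 2) * (ε * (2 + ε) * (1 + s ^ 2) ^ 2 + 8 * s ^ 2)) := by
  have hQ := aux_lemQ ε μ q hε0 h2 h3
  have hsq : (0:ℝ) ≤ (μ ^ 2 + 1) * (((s ^ 2 - 1) * q - 2 * s) ^ 2) := by positivity
  have hQ2 : (0:ℝ) ≤ (1 + s ^ 2) ^ 2 *
      ((μ ^ 2 + 1) * (ε * (2 + ε) * (1 - q ^ 2) - 2 * q ^ 2) - ε * μ ^ 2 * (1 + q ^ 2) ^ 2) :=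
    mul_nonneg (by positivity) hQ
  nlinarith [hsq, hQ2]

/-- The final clean inequality. -/
lemma aux_finalStep (ε μ s q r : ℝ) (hε0 : 0 < ε) (hμ : 0 < μ) (hs : 0 < s) (hq : 0 < q)
    (hr : 0 < r) (h2 : q ^ 2 * μ ^ 2 ≤ 1) (h3 : 2 + ε ≤ ε * μ ^ 2) :
    2 * q * (ε * μ ^ 2 / (μ ^ 2 + 1)) / r ^ 2
      ≤ (2 * s * (1 - s ^ 2) / (r ^ 2 * (1 + s ^ 2) ^ 2)
          + 2 * (1 + ε) ^ 2 * q * (1 - q ^ 2) / (r ^ 2 * (1 + q ^ 2) ^ 2))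
        - ((2 * (2 * s / (1 + s ^ 2)) * ((1 - s ^ 2) / (1 + s ^ 2)))
              * (2 * ((1 - q ^ 2) / (1 + q ^ 2)) ^ 2 - 1)
            + (2 * ((1 - s ^ 2) / (1 + s ^ 2)) ^ 2 - 1)
              * (2 * (2 * q / (1 + q ^ 2)) * ((1 - q ^ 2) / (1 + q ^ 2)))) / (2 * r ^ 2) := by
  rw [← sub_nonneg]
  have h1 : (0:ℝ) < 1 + s ^ 2 := by positivity
  have h2' : (0:ℝ) < 1 + q ^ 2 := by positivity
  have hμ1 : (0:ℝ) < μ ^ 2 + 1 := by positivity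
  have heq : (2 * s * (1 - s ^ 2) / (r ^ 2 * (1 + s ^ 2) ^ 2)
          + 2 * (1 + ε) ^ 2 * q * (1 - q ^ 2) / (r ^ 2 * (1 + q ^ 2) ^ 2))
        - ((2 * (2 * s / (1 + s ^ 2)) * ((1 - s ^ 2) / (1 + s ^ 2)))
              * (2 * ((1 - q ^ 2) / (1 + q ^ 2)) ^ 2 - 1)
            + (2 * ((1 - s ^ 2) / (1 + s ^ 2)) ^ 2 - 1)
              * (2 * (2 * q / (1 + q ^ 2)) * ((1 - q ^ 2) / (1 + q ^ 2)))) / (2 * r ^ 2)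
        - 2 * q * (ε * μ ^ 2 / (μ ^ 2 + 1)) / r ^ 2
      = 2 * q * ((μ ^ 2 + 1) * (8 * s * q * (1 - s ^ 2)
            + (1 - q ^ 2) * (ε * (2 + ε) * (1 + s ^ 2) ^ 2 + 8 * s ^ 2))
          - ε * μ ^ 2 * (1 + s ^ 2) ^ 2 * (1 + q ^ 2) ^ 2)
        / ((μ ^ 2 + 1) * r ^ 2 * (1 + s ^ 2) ^ 2 * (1 + q ^ 2) ^ 2) := by
    field_simp
    ring
  rw [heq]
  apply div_nonneg _ (by positivity)
  have h := aux_corePoly ε μ s q hε0 h2 h3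
  nlinarith [h, hq]

/-- The algebraic identity for `f_t + r f_r`. -/
lemma aux_algLHS (r E₁ Ea Em B β R δ μ ε : ℝ) (hE₁ : 0 < E₁) (hEa : 0 < Ea) (hβ : 0 < β)
    (hB : 0 < B) (hμ : 0 < μ) (hr : 0 < r) :
    (2 * (1 / (1 + (r / (E₁ * β)) ^ 2) *
        ((0 * (E₁ * β) - r * (E₁ * β + E₁ * (-(δ * Em * (β / B))))) / (E₁ * β) ^ 2))
      + 2 * (1 / (1 + (R / (Ea * μ)) ^ 2) *
        ((0 * (Ea * μ) - R * (Ea * (1 + ε) * μ)) / (Ea * μ) ^ 2)))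
     + r * (2 * (1 / (E₁ * β)) * (1 / (1 + (r / (E₁ * β)) ^ 2))
        + 2 * (1 + ε) / (Ea * μ) * ((R / r) / (1 + (R / (Ea * μ)) ^ 2)))
     = 2 * (δ * Em / B) * (r / (E₁ * β)) / (1 + (r / (E₁ * β)) ^ 2) := by
  have h1 : (0:ℝ) < 1 + (r / (E₁ * β)) ^ 2 := by positivity
  have h2 : (0:ℝ) < 1 + (R / (Ea * μ)) ^ 2 := by positivity
  field_simp
  ring

/-- The algebraic identity for `f_rr + f_r/r`. -/
lemma aux_algRHS (r L N R ε : ℝ) (hL : 0 < L) (hN : 0 < N) (hr : 0 < r) :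
    (2 * (1 / L) * ((0 * (1 + (r / L) ^ 2) - 1 * ((2 : ℕ) * (r / L) ^ 1 * (1 / L)))
        / (1 + (r / L) ^ 2) ^ 2)
      + 2 * (1 + ε) / N * ((ε * (R / r ^ 2) * (1 + (R / N) ^ 2)
          - (R / r) * ((2 : ℕ) * (R / N) ^ 1 * ((1 + ε) * (R / r) / N)))
        / (1 + (R / N) ^ 2) ^ 2))
      + (2 * (1 / L) * (1 / (1 + (r / L) ^ 2)) + 2 * (1 + ε) / N * ((R / r) / (1 + (R / N) ^ 2))) / r
    = 2 * (r / L) * (1 - (r / L) ^ 2) / (r ^ 2 * (1 + (r / L) ^ 2) ^ 2)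
      + 2 * (1 + ε) ^ 2 * (R / N) * (1 - (R / N) ^ 2) / (r ^ 2 * (1 + (R / N) ^ 2) ^ 2) := by
  have h1 : (0:ℝ) < 1 + (r / L) ^ 2 := by positivity
  have h2 : (0:ℝ) < 1 + (R / N) ^ 2 := by positivity
  field_simp
  ring

/-- The rpow identity for the dissipative term. -/
lemma aux_lemE (ε δ μ t r β B : ℝ) (hε0 : 0 < ε) (hε1 : ε < 1) (hδ : 0 < δ) (hμ : 0 < μ)
    (hr : 0 < r) (hβ : 0 < β) (hB : 0 < B) (hBβ : β ^ (1 - ε) = B) :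
    δ * Real.exp (-2 * t) / B * (r / (Real.exp t * β)) * r ^ 2
      = δ * μ * (r ^ (1 + ε:ℝ) / (Real.exp ((1 + ε) * t) * μ))
          * (r / (Real.exp t * β)) ^ (2 - ε:ℝ) := by
  have he : (Real.exp t) ^ (2 - ε:ℝ) = Real.exp ((2 - ε) * t) := by
    rw [Real.rpow_def_of_pos (Real.exp_pos t), Real.log_exp, mul_comm]
  have hb2 : β ^ (2 - ε:ℝ) = β * B := by
    rw [show (2 - ε:ℝ) = 1 + (1 - ε) by ring, Real.rpow_add hβ, Real.rpow_one, hBβ]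
  have hs2e : (r / (Real.exp t * β)) ^ (2 - ε:ℝ)
      = r ^ (2 - ε:ℝ) / (Real.exp ((2 - ε) * t) * (β * B)) := by
    rw [Real.div_rpow hr.le (by positivity), Real.mul_rpow (Real.exp_pos t).le hβ.le, he, hb2]
  rw [hs2e]
  have hr2e : r ^ (2 - ε:ℝ) = r ^ 3 / r ^ (1 + ε:ℝ) := by
    rw [eq_div_iff (Real.rpow_pos_of_pos hr _).ne', ← Real.rpow_add hr]
    rw [show (2 - ε + (1 + ε):ℝ) = ((3:ℕ):ℝ) by push_cast; ring, Real.rpow_natCast]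
  have hE₂ : Real.exp ((2 - ε) * t) = Real.exp t / (Real.exp (-2 * t) * Real.exp ((1 + ε) * t)) := by
    rw [eq_div_iff (by positivity), ← Real.exp_add, ← Real.exp_add]
    congr 1; ring
  rw [hr2e, hE₂]
  have h1 : (0:ℝ) < r ^ (1 + ε:ℝ) := Real.rpow_pos_of_pos hr _
  have := Real.exp_pos t; have := Real.exp_pos (-2 * t); have := Real.exp_pos ((1 + ε) * t)
  field_simp

set_option maxHeartbeats 2000000 in
/-- The barrier `f` is a subsolution of the drifted harmonic map heat equation
`f_t + r f_r ≤ f_rr + f_r/r − sin(2f)/(2r²)` on `(0,1] × [0,T₀)`. Moreover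
`M(ε)` is a finite positive number. -/
theorem stmt_13 (ε μ δ β₀ : ℝ) (hε : ε ∈ Ioo (0:ℝ) 1) (hμ : 0 < μ) (hδ : 0 < δ)
    (hβ₀ : 0 < β₀) (hcon : 2 * β₀ ^ (1 - ε) < δ * (1 - ε))
    (hcos : ∀ r ∈ Icc (0:ℝ) 1, ∀ t : ℝ, 0 ≤ t →
      1 / (1 + ε) ≤ Real.cos (2 * Real.arctan (r ^ (1 + ε) / (Real.exp ((1 + ε) * t) * μ))))
    (hδle : δ ≤ μ * ε / (Meps ε * (μ ^ 2 + 1))) :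
    (0 < Meps ε ∧ BddAbove {y : ℝ | ∃ s : ℝ, 0 < s ∧ y = s ^ (2 - ε) / (1 + s ^ 2)}) ∧
    ∀ r ∈ Ioc (0:ℝ) 1, ∀ t ∈ Ico (0:ℝ) (blowupTime ε δ β₀),
      deriv (fun τ => barrier ε δ β₀ μ r τ) t + r * deriv (fun s => barrier ε δ β₀ μ s t) r
        ≤ deriv (deriv (fun s => barrier ε δ β₀ μ s t)) r
          + deriv (fun s => barrier ε δ β₀ μ s t) r / r
          - Real.sin (2 * barrier ε δ β₀ μ r t) / (2 * r ^ 2) := by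
  obtain ⟨hε0, hε1⟩ := hε
  have h1ε : (0:ℝ) < 1 - ε := by linarith
  -- Part 1 : boundedness and positivity of `Meps`
  have hbdd : BddAbove {y : ℝ | ∃ s : ℝ, 0 < s ∧ y = s ^ (2 - ε) / (1 + s ^ 2)} := by
    refine ⟨1, ?_⟩
    rintro y ⟨s, hs, rfl⟩
    have hd : (0:ℝ) < 1 + s ^ 2 := by positivity
    rw [div_le_one hd]
    rcases le_total s 1 with h | h
    · have : s ^ (2 - ε:ℝ) ≤ 1 := Real.rpow_le_one hs.le h (by linarith)
      nlinarith [sq_nonneg s]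
    · have : s ^ (2 - ε:ℝ) ≤ s ^ (2:ℝ) := Real.rpow_le_rpow_of_exponent_le h (by linarith)
      rw [Real.rpow_two] at this
      nlinarith
  have hMhalf : (1:ℝ) / 2 ≤ Meps ε := by
    have hmem : (1:ℝ) ^ (2 - ε:ℝ) / (1 + (1:ℝ) ^ 2) ∈
        {y : ℝ | ∃ s : ℝ, 0 < s ∧ y = s ^ (2 - ε) / (1 + s ^ 2)} := ⟨1, one_pos, rfl⟩
    have h := le_csSup hbdd hmem
    rw [Real.one_rpow] at h
    norm_num at h
    unfold Meps
    linarith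
  have hMpos : 0 < Meps ε := by linarith
  refine ⟨⟨hMpos, hbdd⟩, ?_⟩
  intro r hrmem t htmem
  obtain ⟨hr, hr1⟩ := hrmem
  obtain ⟨ht0, htT⟩ := htmem
  -- the bound on μ from hcos
  have hμ2 : 2 + ε ≤ ε * μ ^ 2 := by
    have h := hcos 1 ⟨zero_le_one, le_refl 1⟩ 0 le_rfl
    rw [Real.one_rpow] at h
    simp only [mul_zero, Real.exp_zero, one_mul] at h
    rw [aux_cos_two_arctan] at h
    have hμ2' : (0:ℝ) < 1 + (1 / μ) ^ 2 := by positivity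
    have h1ε' : (0:ℝ) < 1 + ε := by linarith
    rw [div_le_div_iff₀ h1ε' hμ2'] at h
    have hμ0 : μ ≠ 0 := hμ.ne'
    field_simp at h
    nlinarith [sq_nonneg μ, mul_pos hμ hμ]
  -- positivity of B
  have hA : 0 < δ * (1 - ε) := by positivity
  have hK : 0 < β₀ ^ (1 - ε:ℝ) := Real.rpow_pos_of_pos hβ₀ _
  have hAK : 0 < δ * (1 - ε) - 2 * β₀ ^ (1 - ε) := by linarith
  set B := δ * (1 - ε) / 2 * (Real.exp (-2 * t) - 1) + β₀ ^ (1 - ε) with hBdef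
  have hB : 0 < B := by
    have h2t : Real.exp (2 * t) < δ * (1 - ε) / (δ * (1 - ε) - 2 * β₀ ^ (1 - ε)) := by
      have : 2 * t < Real.log (δ * (1 - ε) / (δ * (1 - ε) - 2 * β₀ ^ (1 - ε))) := by
        unfold blowupTime at htT; linarith
      calc Real.exp (2 * t)
          < Real.exp (Real.log (δ * (1 - ε) / (δ * (1 - ε) - 2 * β₀ ^ (1 - ε)))) :=
            Real.exp_lt_exp.mpr this
        _ = δ * (1 - ε) / (δ * (1 - ε) - 2 * β₀ ^ (1 - ε)) := Real.exp_log (by positivity)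
    have hlt : (δ * (1 - ε) - 2 * β₀ ^ (1 - ε)) / (δ * (1 - ε)) < Real.exp (-2 * t) := by
      have hm : Real.exp (-2 * t) * Real.exp (2 * t) = 1 := by
        rw [← Real.exp_add]; norm_num
      rw [lt_div_iff₀ hAK] at h2t
      rw [div_lt_iff₀ hA]
      nlinarith [Real.exp_pos (2 * t), Real.exp_pos (-2 * t)]
    rw [div_lt_iff₀ hA] at hlt
    have := Real.exp_pos (-2 * t)
    rw [hBdef]
    nlinarith
  -- β and its derivative
  set β := betaFun ε δ β₀ t with hβdef
  have hβeq : β = B ^ ((1:ℝ) / (1 - ε)) := rfl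
  have hβpos : 0 < β := by rw [hβeq]; exact Real.rpow_pos_of_pos hB _
  have hBβ : β ^ (1 - ε:ℝ) = B := by
    rw [hβeq, ← Real.rpow_mul hB.le, one_div_mul_cancel h1ε.ne', Real.rpow_one]
  have hBB : B ^ ((1:ℝ) / (1 - ε) - 1) * B = β := by
    rw [hβeq, ← Real.rpow_add_one hB.ne']
    ring_nf
  have hXeq : B ^ ((1:ℝ) / (1 - ε) - 1) = β / B := by
    rw [eq_div_iff hB.ne']; exact hBB
  have hInner : HasDerivAt (fun τ => δ * (1 - ε) / 2 * (Real.exp (-2 * τ) - 1) + β₀ ^ (1 - ε))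
      (δ * (1 - ε) / 2 * (Real.exp (-2 * t) * (-2))) t := by
    have h1 : HasDerivAt (fun τ : ℝ => -2 * τ) (-2) t := by
      simpa using (hasDerivAt_id t).const_mul (-2 : ℝ)
    exact (((h1.exp).sub_const 1).const_mul _).add_const _
  have houter : HasDerivAt (fun y : ℝ => y ^ ((1:ℝ) / (1 - ε)))
      ((1 / (1 - ε)) * B ^ ((1:ℝ) / (1 - ε) - 1)) B :=
    Real.hasDerivAt_rpow_const (Or.inl hB.ne')
  have hβd : HasDerivAt (betaFun ε δ β₀)
      (-(δ * Real.exp (-2 * t) * B ^ ((1:ℝ) / (1 - ε) - 1))) t := by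
    have h := houter.comp t hInner
    refine h.congr_deriv ?_
    field_simp
  -- basic positivity
  have hL : 0 < Real.exp t * β := by positivity
  have hN : 0 < Real.exp ((1 + ε) * t) * μ := by positivity
  have hRpos : 0 < r ^ (1 + ε:ℝ) := Real.rpow_pos_of_pos hr _
  -- time derivative of the barrier
  have hLd : HasDerivAt (fun τ => Real.exp τ * betaFun ε δ β₀ τ)
      (Real.exp t * β + Real.exp t * (-(δ * Real.exp (-2 * t) * B ^ ((1:ℝ) / (1 - ε) - 1)))) t := by
    exact (Real.hasDerivAt_exp t).mul hβd
  have ht1 : HasDerivAt (fun τ => r / (Real.exp τ * betaFun ε δ β₀ τ))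
      ((0 * (Real.exp t * β) - r * (Real.exp t * β
          + Real.exp t * (-(δ * Real.exp (-2 * t) * B ^ ((1:ℝ) / (1 - ε) - 1)))))
        / (Real.exp t * β) ^ 2) t :=
    (hasDerivAt_const t r).div hLd hL.ne'
  have hNd : HasDerivAt (fun τ => Real.exp ((1 + ε) * τ) * μ)
      (Real.exp ((1 + ε) * t) * (1 + ε) * μ) t := by
    have h1 : HasDerivAt (fun τ : ℝ => (1 + ε) * τ) (1 + ε) t := by
      simpa using (hasDerivAt_id t).const_mul (1 + ε)
    exact (h1.exp).mul_const μ
  have ht2 : HasDerivAt (fun τ => r ^ (1 + ε:ℝ) / (Real.exp ((1 + ε) * τ) * μ))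
      ((0 * (Real.exp ((1 + ε) * t) * μ)
          - r ^ (1 + ε:ℝ) * (Real.exp ((1 + ε) * t) * (1 + ε) * μ))
        / (Real.exp ((1 + ε) * t) * μ) ^ 2) t :=
    (hasDerivAt_const t (r ^ (1 + ε:ℝ))).div hNd hN.ne'
  have hT : HasDerivAt (fun τ => barrier ε δ β₀ μ r τ)
      (2 * (1 / (1 + (r / (Real.exp t * β)) ^ 2) *
          ((0 * (Real.exp t * β) - r * (Real.exp t * β
              + Real.exp t * (-(δ * Real.exp (-2 * t) * B ^ ((1:ℝ) / (1 - ε) - 1)))))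
            / (Real.exp t * β) ^ 2))
        + 2 * (1 / (1 + (r ^ (1 + ε:ℝ) / (Real.exp ((1 + ε) * t) * μ)) ^ 2) *
          ((0 * (Real.exp ((1 + ε) * t) * μ)
              - r ^ (1 + ε:ℝ) * (Real.exp ((1 + ε) * t) * (1 + ε) * μ))
            / (Real.exp ((1 + ε) * t) * μ) ^ 2))) t :=
    ((ht1.arctan).const_mul 2).add ((ht2.arctan).const_mul 2)
  -- first r-derivative
  set F : ℝ → ℝ := fun x => 2 * (1 / (Real.exp t * β)) * (1 / (1 + (x / (Real.exp t * β)) ^ 2))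
      + 2 * (1 + ε) / (Real.exp ((1 + ε) * t) * μ)
        * (x ^ (ε:ℝ) / (1 + (x ^ (1 + ε:ℝ) / (Real.exp ((1 + ε) * t) * μ)) ^ 2)) with hFdef
  have hFr : ∀ x, 0 < x → HasDerivAt (fun y => barrier ε δ β₀ μ y t) (F x) x := by
    intro x hx
    have h1 : HasDerivAt (fun y : ℝ => y / (Real.exp t * β)) (1 / (Real.exp t * β)) x := by
      simpa using (hasDerivAt_id x).div_const (Real.exp t * β)
    have h2 : HasDerivAt (fun y : ℝ => y ^ (1 + ε:ℝ)) ((1 + ε) * x ^ (ε:ℝ)) x := by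
      have := Real.hasDerivAt_rpow_const (x := x) (p := 1 + ε) (Or.inl hx.ne')
      simpa [add_sub_cancel_left] using this
    have hmain := ((h1.arctan).const_mul 2).add
      (((h2.div_const (Real.exp ((1 + ε) * t) * μ)).arctan).const_mul 2)
    refine hmain.congr_deriv ?_
    rw [hFdef]
    have hd1 : (0:ℝ) < 1 + (x / (Real.exp t * β)) ^ 2 := by positivity
    have hd2 : (0:ℝ) < 1 + (x ^ (1 + ε:ℝ) / (Real.exp ((1 + ε) * t) * μ)) ^ 2 := by positivity
    field_simp
  -- second r-derivative
  have h1r : HasDerivAt (fun y : ℝ => y / (Real.exp t * β)) (1 / (Real.exp t * β)) r := by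
    simpa using (hasDerivAt_id r).div_const (Real.exp t * β)
  have hden1 : HasDerivAt (fun y : ℝ => 1 + (y / (Real.exp t * β)) ^ 2)
      ((2 : ℕ) * (r / (Real.exp t * β)) ^ 1 * (1 / (Real.exp t * β))) r :=
    (h1r.pow 2).const_add 1
  have hd1r : (0:ℝ) < 1 + (r / (Real.exp t * β)) ^ 2 := by positivity
  have hpiece1 : HasDerivAt
      (fun x : ℝ => 2 * (1 / (Real.exp t * β)) * (1 / (1 + (x / (Real.exp t * β)) ^ 2)))
      (2 * (1 / (Real.exp t * β)) * ((0 * (1 + (r / (Real.exp t * β)) ^ 2)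
          - 1 * ((2 : ℕ) * (r / (Real.exp t * β)) ^ 1 * (1 / (Real.exp t * β))))
        / (1 + (r / (Real.exp t * β)) ^ 2) ^ 2)) r :=
    ((hasDerivAt_const r (1:ℝ)).div hden1 hd1r.ne').const_mul _
  have hpow2 : HasDerivAt (fun y : ℝ => y ^ (1 + ε:ℝ)) ((1 + ε) * r ^ (ε:ℝ)) r := by
    have := Real.hasDerivAt_rpow_const (x := r) (p := 1 + ε) (Or.inl hr.ne')
    simpa [add_sub_cancel_left] using this
  have hden2 : HasDerivAt
      (fun y : ℝ => 1 + (y ^ (1 + ε:ℝ) / (Real.exp ((1 + ε) * t) * μ)) ^ 2)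
      ((2 : ℕ) * (r ^ (1 + ε:ℝ) / (Real.exp ((1 + ε) * t) * μ)) ^ 1
        * ((1 + ε) * r ^ (ε:ℝ) / (Real.exp ((1 + ε) * t) * μ))) r :=
    ((hpow2.div_const (Real.exp ((1 + ε) * t) * μ)).pow 2).const_add 1
  have hd2r : (0:ℝ) < 1 + (r ^ (1 + ε:ℝ) / (Real.exp ((1 + ε) * t) * μ)) ^ 2 := by positivity
  have hnum2 : HasDerivAt (fun y : ℝ => y ^ (ε:ℝ)) (ε * r ^ (ε - 1:ℝ)) r :=
    Real.hasDerivAt_rpow_const (Or.inl hr.ne')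
  have hpiece2 : HasDerivAt (fun x : ℝ => 2 * (1 + ε) / (Real.exp ((1 + ε) * t) * μ)
      * (x ^ (ε:ℝ) / (1 + (x ^ (1 + ε:ℝ) / (Real.exp ((1 + ε) * t) * μ)) ^ 2)))
      (2 * (1 + ε) / (Real.exp ((1 + ε) * t) * μ)
        * ((ε * r ^ (ε - 1:ℝ) * (1 + (r ^ (1 + ε:ℝ) / (Real.exp ((1 + ε) * t) * μ)) ^ 2)
          - r ^ (ε:ℝ) * ((2 : ℕ) * (r ^ (1 + ε:ℝ) / (Real.exp ((1 + ε) * t) * μ)) ^ 1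
            * ((1 + ε) * r ^ (ε:ℝ) / (Real.exp ((1 + ε) * t) * μ))))
        / (1 + (r ^ (1 + ε:ℝ) / (Real.exp ((1 + ε) * t) * μ)) ^ 2) ^ 2)) r :=
    ((hnum2.div hden2 hd2r.ne')).const_mul _
  have hFd : HasDerivAt F
      (2 * (1 / (Real.exp t * β)) * ((0 * (1 + (r / (Real.exp t * β)) ^ 2)
          - 1 * ((2 : ℕ) * (r / (Real.exp t * β)) ^ 1 * (1 / (Real.exp t * β))))
        / (1 + (r / (Real.exp t * β)) ^ 2) ^ 2)
      + 2 * (1 + ε) / (Real.exp ((1 + ε) * t) * μ)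
        * ((ε * r ^ (ε - 1:ℝ) * (1 + (r ^ (1 + ε:ℝ) / (Real.exp ((1 + ε) * t) * μ)) ^ 2)
          - r ^ (ε:ℝ) * ((2 : ℕ) * (r ^ (1 + ε:ℝ) / (Real.exp ((1 + ε) * t) * μ)) ^ 1
            * ((1 + ε) * r ^ (ε:ℝ) / (Real.exp ((1 + ε) * t) * μ))))
        / (1 + (r ^ (1 + ε:ℝ) / (Real.exp ((1 + ε) * t) * μ)) ^ 2) ^ 2)) r :=
    hpiece1.add hpiece2
  have hderiv1 : deriv (fun y => barrier ε δ β₀ μ y t) r = F r := (hFr r hr).deriv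
  have hev : deriv (fun y => barrier ε δ β₀ μ y t) =ᶠ[nhds r] F := by
    filter_upwards [isOpen_Ioi.mem_nhds (show r ∈ Ioi (0:ℝ) from hr)] with x hx
    exact (hFr x hx).deriv
  have hderiv2 : deriv (deriv (fun y => barrier ε δ β₀ μ y t)) r
      = (2 * (1 / (Real.exp t * β)) * ((0 * (1 + (r / (Real.exp t * β)) ^ 2)
          - 1 * ((2 : ℕ) * (r / (Real.exp t * β)) ^ 1 * (1 / (Real.exp t * β))))
        / (1 + (r / (Real.exp t * β)) ^ 2) ^ 2)
      + 2 * (1 + ε) / (Real.exp ((1 + ε) * t) * μ)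
        * ((ε * r ^ (ε - 1:ℝ) * (1 + (r ^ (1 + ε:ℝ) / (Real.exp ((1 + ε) * t) * μ)) ^ 2)
          - r ^ (ε:ℝ) * ((2 : ℕ) * (r ^ (1 + ε:ℝ) / (Real.exp ((1 + ε) * t) * μ)) ^ 1
            * ((1 + ε) * r ^ (ε:ℝ) / (Real.exp ((1 + ε) * t) * μ))))
        / (1 + (r ^ (1 + ε:ℝ) / (Real.exp ((1 + ε) * t) * μ)) ^ 2) ^ 2)) := by
    rw [hev.deriv_eq]; exact hFd.deriv
  have hFrEq : F r = 2 * (1 / (Real.exp t * β)) * (1 / (1 + (r / (Real.exp t * β)) ^ 2))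
      + 2 * (1 + ε) / (Real.exp ((1 + ε) * t) * μ)
        * (r ^ (ε:ℝ) / (1 + (r ^ (1 + ε:ℝ) / (Real.exp ((1 + ε) * t) * μ)) ^ 2)) := by
    simp only [hFdef]
  -- rpow rewrites
  have hre : r ^ (ε:ℝ) = r ^ (1 + ε:ℝ) / r := by
    rw [eq_div_iff hr.ne', ← Real.rpow_add_one hr.ne']
    congr 1; ring
  have hre2 : r ^ (ε - 1:ℝ) = r ^ (1 + ε:ℝ) / r ^ 2 := by
    rw [eq_div_iff (by positivity), ← Real.rpow_natCast r 2, ← Real.rpow_add hr]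
    congr 1; push_cast; ring
  -- the sine of the barrier
  have hbar : barrier ε δ β₀ μ r t = 2 * Real.arctan (r / (Real.exp t * β))
      + 2 * Real.arctan (r ^ (1 + ε:ℝ) / (Real.exp ((1 + ε) * t) * μ)) := rfl
  have hsin : Real.sin (2 * barrier ε δ β₀ μ r t)
      = (2 * (2 * (r / (Real.exp t * β)) / (1 + (r / (Real.exp t * β)) ^ 2))
            * ((1 - (r / (Real.exp t * β)) ^ 2) / (1 + (r / (Real.exp t * β)) ^ 2)))
          * (2 * ((1 - (r ^ (1 + ε:ℝ) / (Real.exp ((1 + ε) * t) * μ)) ^ 2)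
              / (1 + (r ^ (1 + ε:ℝ) / (Real.exp ((1 + ε) * t) * μ)) ^ 2)) ^ 2 - 1)
        + (2 * ((1 - (r / (Real.exp t * β)) ^ 2) / (1 + (r / (Real.exp t * β)) ^ 2)) ^ 2 - 1)
          * (2 * (2 * (r ^ (1 + ε:ℝ) / (Real.exp ((1 + ε) * t) * μ))
              / (1 + (r ^ (1 + ε:ℝ) / (Real.exp ((1 + ε) * t) * μ)) ^ 2))
            * ((1 - (r ^ (1 + ε:ℝ) / (Real.exp ((1 + ε) * t) * μ)) ^ 2)
              / (1 + (r ^ (1 + ε:ℝ) / (Real.exp ((1 + ε) * t) * μ)) ^ 2))) := by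
    rw [hbar]
    rw [show 2 * (2 * Real.arctan (r / (Real.exp t * β))
        + 2 * Real.arctan (r ^ (1 + ε:ℝ) / (Real.exp ((1 + ε) * t) * μ)))
      = 2 * (2 * Real.arctan (r / (Real.exp t * β)))
        + 2 * (2 * Real.arctan (r ^ (1 + ε:ℝ) / (Real.exp ((1 + ε) * t) * μ))) by ring]
    rw [Real.sin_add,
      Real.sin_two_mul (2 * Real.arctan (r / (Real.exp t * β))),
      Real.sin_two_mul (2 * Real.arctan (r ^ (1 + ε:ℝ) / (Real.exp ((1 + ε) * t) * μ))),
      Real.cos_two_mul (2 * Real.arctan (r / (Real.exp t * β))),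
      Real.cos_two_mul (2 * Real.arctan (r ^ (1 + ε:ℝ) / (Real.exp ((1 + ε) * t) * μ))),
      aux_sin_two_arctan (r / (Real.exp t * β)),
      aux_sin_two_arctan (r ^ (1 + ε:ℝ) / (Real.exp ((1 + ε) * t) * μ)),
      aux_cos_two_arctan (r / (Real.exp t * β)),
      aux_cos_two_arctan (r ^ (1 + ε:ℝ) / (Real.exp ((1 + ε) * t) * μ))]
  -- rewrite the goal
  rw [hT.deriv, hderiv1, hderiv2, hFrEq, hsin, hXeq, hre, hre2]
  -- clean forms of the three pieces
  have hLHSeq := aux_algLHS r (Real.exp t) (Real.exp ((1 + ε) * t)) (Real.exp (-2 * t)) B β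
      (r ^ (1 + ε:ℝ)) δ μ ε (Real.exp_pos t) (Real.exp_pos _) hβpos hB hμ hr
  have hRHSeq := aux_algRHS r (Real.exp t * β) (Real.exp ((1 + ε) * t) * μ) (r ^ (1 + ε:ℝ)) ε
      hL hN hr
  rw [hLHSeq, hRHSeq]
  -- the dissipative bound
  have hqpos : 0 < r ^ (1 + ε:ℝ) / (Real.exp ((1 + ε) * t) * μ) := by positivity
  have hspos : 0 < r / (Real.exp t * β) := by positivity
  have hqμ : (r ^ (1 + ε:ℝ) / (Real.exp ((1 + ε) * t) * μ)) * μ ≤ 1 := by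
    have hR1 : r ^ (1 + ε:ℝ) ≤ 1 := Real.rpow_le_one hr.le hr1 (by linarith)
    have hEa1 : 1 ≤ Real.exp ((1 + ε) * t) := Real.one_le_exp (by positivity)
    rw [div_mul_eq_mul_div, div_le_one hN]
    calc r ^ (1 + ε:ℝ) * μ ≤ 1 * μ := mul_le_mul_of_nonneg_right hR1 hμ.le
      _ = μ := one_mul μ
      _ ≤ Real.exp ((1 + ε) * t) * μ := le_mul_of_one_le_left hμ.le hEa1
  have hq2 : (r ^ (1 + ε:ℝ) / (Real.exp ((1 + ε) * t) * μ)) ^ 2 * μ ^ 2 ≤ 1 := by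
    have h' : ((r ^ (1 + ε:ℝ) / (Real.exp ((1 + ε) * t) * μ)) * μ) ^ 2 ≤ 1 :=
      pow_le_one₀ (by positivity) hqμ
    calc (r ^ (1 + ε:ℝ) / (Real.exp ((1 + ε) * t) * μ)) ^ 2 * μ ^ 2
        = ((r ^ (1 + ε:ℝ) / (Real.exp ((1 + ε) * t) * μ)) * μ) ^ 2 := by ring
      _ ≤ 1 := h'
  -- the dissipative bound
  have hE := aux_lemE ε δ μ t r β B hε0 hε1 hδ hμ hr hβpos hB hBβ
  have hMs : (r / (Real.exp t * β)) ^ (2 - ε:ℝ)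
      ≤ Meps ε * (1 + (r / (Real.exp t * β)) ^ 2) := by
    have hmem : (r / (Real.exp t * β)) ^ (2 - ε:ℝ) / (1 + (r / (Real.exp t * β)) ^ 2) ∈
        {y : ℝ | ∃ s : ℝ, 0 < s ∧ y = s ^ (2 - ε) / (1 + s ^ 2)} := ⟨_, hspos, rfl⟩
    have h := le_csSup hbdd hmem
    rw [div_le_iff₀ (by positivity)] at h
    exact h
  have hδμ : δ * μ ≤ ε * μ ^ 2 / (Meps ε * (μ ^ 2 + 1)) := by
    have h1 := mul_le_mul_of_nonneg_right hδle hμ.le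
    have h2 : μ * ε / (Meps ε * (μ ^ 2 + 1)) * μ = ε * μ ^ 2 / (Meps ε * (μ ^ 2 + 1)) := by
      ring
    linarith only [h1, h2]
  have hdis : δ * Real.exp (-2 * t) / B * (r / (Real.exp t * β)) * r ^ 2
      ≤ (r ^ (1 + ε:ℝ) / (Real.exp ((1 + ε) * t) * μ)) * (ε * μ ^ 2 / (μ ^ 2 + 1))
          * (1 + (r / (Real.exp t * β)) ^ 2) := by
    rw [hE]
    have step : δ * μ * (r ^ (1 + ε:ℝ) / (Real.exp ((1 + ε) * t) * μ))
          * (r / (Real.exp t * β)) ^ (2 - ε:ℝ)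
        ≤ (ε * μ ^ 2 / (Meps ε * (μ ^ 2 + 1)) * (r ^ (1 + ε:ℝ) / (Real.exp ((1 + ε) * t) * μ)))
          * (Meps ε * (1 + (r / (Real.exp t * β)) ^ 2)) := by
      apply mul_le_mul (mul_le_mul_of_nonneg_right hδμ hqpos.le) hMs
        (Real.rpow_nonneg hspos.le _) (by positivity)
    have heq2 : (ε * μ ^ 2 / (Meps ε * (μ ^ 2 + 1)) * (r ^ (1 + ε:ℝ) / (Real.exp ((1 + ε) * t) * μ)))
          * (Meps ε * (1 + (r / (Real.exp t * β)) ^ 2))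
        = (r ^ (1 + ε:ℝ) / (Real.exp ((1 + ε) * t) * μ)) * (ε * μ ^ 2 / (μ ^ 2 + 1))
          * (1 + (r / (Real.exp t * β)) ^ 2) := by
      field_simp
    linarith only [step, heq2]
  -- final chain
  have hfin := aux_finalStep ε μ (r / (Real.exp t * β))
    (r ^ (1 + ε:ℝ) / (Real.exp ((1 + ε) * t) * μ)) r hε0 hμ hspos hqpos hr hq2 hμ2
  have e1 : 2 * (δ * Real.exp (-2 * t) / B) * (r / (Real.exp t * β))
        / (1 + (r / (Real.exp t * β)) ^ 2)
      = 2 * (δ * Real.exp (-2 * t) / B * (r / (Real.exp t * β)) * r ^ 2)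
        / (r ^ 2 * (1 + (r / (Real.exp t * β)) ^ 2)) := by
    have hd : (0:ℝ) < 1 + (r / (Real.exp t * β)) ^ 2 := by positivity
    field_simp
  have e2 : 2 * ((r ^ (1 + ε:ℝ) / (Real.exp ((1 + ε) * t) * μ)) * (ε * μ ^ 2 / (μ ^ 2 + 1))
        * (1 + (r / (Real.exp t * β)) ^ 2)) / (r ^ 2 * (1 + (r / (Real.exp t * β)) ^ 2))
      = 2 * (r ^ (1 + ε:ℝ) / (Real.exp ((1 + ε) * t) * μ)) * (ε * μ ^ 2 / (μ ^ 2 + 1)) / r ^ 2 := by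
    have hd : (0:ℝ) < 1 + (r / (Real.exp t * β)) ^ 2 := by positivity
    field_simp
  have e3 : 2 * (r ^ (1 + ε:ℝ) / (Real.exp ((1 + ε) * t) * μ)) * (ε * μ ^ 2 / (μ ^ 2 + 1)) / r ^ 2
      = 2 * (r ^ (1 + ε:ℝ) / (Real.exp ((1 + ε) * t) * μ)) * (ε * μ ^ 2 / (μ ^ 2 + 1)) / r ^ 2 :=
    rfl
  calc 2 * (δ * Real.exp (-2 * t) / B) * (r / (Real.exp t * β))
        / (1 + (r / (Real.exp t * β)) ^ 2)
      = 2 * (δ * Real.exp (-2 * t) / B * (r / (Real.exp t * β)) * r ^ 2)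
        / (r ^ 2 * (1 + (r / (Real.exp t * β)) ^ 2)) := e1
    _ ≤ 2 * ((r ^ (1 + ε:ℝ) / (Real.exp ((1 + ε) * t) * μ)) * (ε * μ ^ 2 / (μ ^ 2 + 1))
        * (1 + (r / (Real.exp t * β)) ^ 2)) / (r ^ 2 * (1 + (r / (Real.exp t * β)) ^ 2)) := by
        gcongr
    _ = 2 * (r ^ (1 + ε:ℝ) / (Real.exp ((1 + ε) * t) * μ)) * (ε * μ ^ 2 / (μ ^ 2 + 1)) / r ^ 2 := e2
    _ = 2 * (r ^ (1 + ε:ℝ) / (Real.exp ((1 + ε) * t) * μ)) * (ε * μ ^ 2 / (μ ^ 2 + 1)) / r ^ 2 := rfl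
    _ ≤ _ := hfin

end
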